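/- arXiv:1808.01619 — 3 statements merged into one kernel-verified Lean document; each statement's English description precedes it below -/
import Mathlib

section
/- Let Θ ⊂ ℝ^d be a finite set satisfying Condition A. Then the additive subgroup of ℝ^d generated by Θ is discrete; that is, there exists r > 0 such that the only element of this subgroup in the open ball of radius r around 0 is 0. -/
set_option maxHeartbeats 1000000


/-- Condition A: every finite family of elements of `Θ` that is linearly dependent over `ℝ`
admits a nontrivial integer linear dependence. -/
def ConditionA {d : ℕ} (Θ : Set (EuclideanSpace ℝ (Fin d))) : Prop :=
  ∀ (m : ℕ) (θ : Fin m → EuclideanSpace ℝ (Fin d)),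
    (∀ i, θ i ∈ Θ) → ¬ LinearIndependent ℝ θ →
      ∃ n : Fin m → ℤ, (∃ i, n i ≠ 0) ∧ ∑ i, (n i : ℝ) • θ i = 0

/-- For a finite set `Θ` satisfying Condition A, the additive subgroup of `ℝ^d` generated
by `Θ` is discrete. -/
theorem stmt_3 (d : ℕ) (Θ : Set (EuclideanSpace ℝ (Fin d))) (hfin : Θ.Finite)
    (hA : ConditionA Θ) :
    ∃ r > (0 : ℝ), ∀ x ∈ AddSubgroup.closure Θ, ‖x‖ < r → x = 0 := by
  classical
  let E := EuclideanSpace ℝ (Fin d)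
  obtain ⟨t, hts, hspan, hli⟩ := exists_linearIndependent ℝ Θ
  -- basis extending t
  let b := Module.Basis.extend hli
  haveI : Fintype (LinearIndepOn.extend (show LinearIndepOn ℝ id t from hli) (Set.subset_univ t)) := FiniteDimensional.fintypeBasisIndex b
  set L : Submodule ℤ E := Submodule.span ℤ (Set.range b) with hL
  have htb : t ⊆ Set.range b := by
    rw [Module.Basis.range_extend (hli : LinearIndepOn ℝ id t)]; exact LinearIndepOn.subset_extend (show LinearIndepOn ℝ id t from hli) _
  -- discreteness of L
  have hdisc : ∃ ε > (0:ℝ), ∀ y ∈ L, ‖y‖ < ε → y = (0:E) := by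
    have h0 : IsOpen ({0} : Set L) := isOpen_discrete _
    rw [isOpen_induced_iff] at h0
    obtain ⟨U, hU, hU0⟩ := h0
    have h0U : (0:E) ∈ U := by
      have : ((0:L) : E) ∈ U := by
        have : (0:L) ∈ Subtype.val ⁻¹' U := by rw [hU0]; rfl
        exact this
      simpa using this
    obtain ⟨ε, hε, hball⟩ := Metric.isOpen_iff.mp hU 0 h0U
    refine ⟨ε, hε, fun y hy hnorm => ?_⟩
    have : (⟨y, hy⟩ : L) ∈ Subtype.val ⁻¹' U := by
      apply hball; simpa [Metric.mem_ball, dist_zero_right] using hnorm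
    rw [hU0] at this
    simpa using congrArg Subtype.val this
  obtain ⟨ε, hε, hεL⟩ := hdisc
  -- enumeration of t
  have htfin : t.Finite := hfin.subset hts
  haveI : Fintype t := htfin.fintype
  set m := Fintype.card t
  let e : Fin m ≃ t := (Fintype.equivFin t).symm
  let g : Fin m → E := fun i => ((e i : t) : E)
  have hgli : LinearIndependent ℝ g := hli.comp e e.injective
  have hrange : Set.range g = t := by
    have : Set.range g = Subtype.val '' (Set.range e) := by
      rw [← Set.range_comp]; rfl
    rw [this, e.range_eq_univ, Set.image_univ, Subtype.range_coe]
  -- every θ ∈ Θ has a nonzero integer multiple in L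
  have key : ∀ θ ∈ Θ, ∃ k : ℤ, k ≠ 0 ∧ k • θ ∈ L := by
    intro θ hθ
    have hθspan : θ ∈ Submodule.span ℝ (Set.range g) := by
      rw [hrange, hspan]; exact Submodule.subset_span hθ
    have hdep : ¬ LinearIndependent ℝ (Fin.cons θ g : Fin (m+1) → E) := by
      rw [linearIndependent_fin_cons]
      push_neg
      intro _; exact hθspan
    obtain ⟨n, ⟨i0, hi0⟩, hsum⟩ := hA (m+1) (Fin.cons θ g)
      (fun i => by
        refine Fin.cases ?_ ?_ i
        · simpa using hθ
        · intro j; simpa using hts (e j).2) hdep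
    rw [Fin.sum_univ_succ] at hsum
    simp only [Fin.cons_zero, Fin.cons_succ] at hsum
    have hn0 : n 0 ≠ 0 := by
      intro h0
      have hz : ∑ i : Fin m, ((n i.succ : ℝ)) • g i = 0 := by
        rw [h0] at hsum; simpa using hsum
      have := Fintype.linearIndependent_iff.mp hgli (fun i => (n i.succ : ℝ)) hz
      apply hi0
      refine Fin.cases ?_ ?_ i0
      · exact h0
      · intro j
        have hj : ((n j.succ : ℝ)) = 0 := this j
        exact_mod_cast hj
    refine ⟨n 0, hn0, ?_⟩
    have heq : (n 0 : ℤ) • θ = - ∑ i : Fin m, (n i.succ : ℤ) • g i := by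
      have : (n 0 : ℝ) • θ = - ∑ i : Fin m, (n i.succ : ℝ) • g i := by
        rw [eq_neg_iff_add_eq_zero]; exact hsum
      rw [← Int.cast_smul_eq_zsmul ℝ, this]
      simp [← Int.cast_smul_eq_zsmul ℝ]
    rw [heq]
    refine neg_mem (Submodule.sum_mem _ (fun i _ => Submodule.smul_mem _ _ ?_))
    exact Submodule.subset_span (htb (e i).2)
  -- choose common multiplier
  have key' : ∀ θ : E, ∃ k : ℤ, k ≠ 0 ∧ (θ ∈ Θ → k • θ ∈ L) := by
    intro θ
    by_cases hθ : θ ∈ Θ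
    · obtain ⟨k, hk, hkL⟩ := key θ hθ; exact ⟨k, hk, fun _ => hkL⟩
    · exact ⟨1, one_ne_zero, fun h => absurd h hθ⟩
  choose k hk0 hkL using key'
  set F := hfin.toFinset
  set N : ℤ := ∏ θ ∈ F, k θ with hN
  have hNne : N ≠ 0 := Finset.prod_ne_zero_iff.mpr (fun θ _ => hk0 θ)
  have hNmul : ∀ θ ∈ Θ, N • θ ∈ L := by
    intro θ hθ
    have hθF : θ ∈ F := hfin.mem_toFinset.mpr hθ
    obtain ⟨c, hc⟩ := Finset.dvd_prod_of_mem k hθF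
    rw [hN, hc, mul_comm, mul_smul]
    exact Submodule.smul_mem _ _ (hkL θ hθ)
  -- closure ⊆ preimage of L under N•
  have hsub : ∀ x ∈ AddSubgroup.closure Θ, N • x ∈ L := by
    intro x hx
    have : AddSubgroup.closure Θ ≤
        (L.toAddSubgroup).comap (DistribMulAction.toAddMonoidHom E N) :=
      (AddSubgroup.closure_le _).mpr (fun θ hθ => hNmul θ hθ)
    exact this hx
  refine ⟨ε / |N|, by positivity, fun x hx hxn => ?_⟩
  have hNx : N • x ∈ L := hsub x hx
  have hnorm : ‖N • x‖ < ε := by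
    have : ‖N • x‖ = |(N:ℝ)| * ‖x‖ := by
      rw [← Int.cast_smul_eq_zsmul ℝ, norm_smul, Real.norm_eq_abs]
    rw [this]
    have hN' : (0:ℝ) < |(N:ℝ)| := by
      simp only [abs_pos, Int.cast_ne_zero]; exact hNne
    calc |(N:ℝ)| * ‖x‖ < |(N:ℝ)| * (ε / |N|) := by
          apply mul_lt_mul_of_pos_left hxn hN'
      _ = ε := by
          rw [← Int.cast_abs]
          field_simp
  have hzero : N • x = 0 := hεL _ hNx hnorm
  have : (N:ℝ) • x = 0 := by rwa [Int.cast_smul_eq_zsmul]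
  rcases smul_eq_zero.mp this with h | h
  · exact absurd (Int.cast_eq_zero.mp h) hNne
  · exact h
end

section
/- Let Γ be a discrete additive subgroup of ℝ^d whose ℝ-linear span is all of ℝ^d, let F ⊂ ℝ^d be a finite set, and suppose that Θ := F + Γ = {f + γ : f ∈ F, γ ∈ Γ} satisfies Condition A. Then the additive subgroup of ℝ^d generated by Θ is discrete. -/
open Pointwise

section Aux

variable {E : Type*} [NormedAddCommGroup E]

/-- Extract a uniform separation radius from a discrete `ℤ`-submodule. -/
lemma aux_discrete_out (L : Submodule ℤ (EuclideanSpace ℝ (Fin d))) [DiscreteTopology L] :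
    ∃ r > (0 : ℝ), ∀ x ∈ L, ‖x‖ < r → x = 0 := by
  have h : IsOpen ({0} : Set L) := isOpen_discrete _
  rw [Metric.isOpen_iff] at h
  obtain ⟨ε, hε, hball⟩ := h 0 rfl
  refine ⟨ε, hε, fun x hx hxε => ?_⟩
  have hmem : (⟨x, hx⟩ : L) ∈ Metric.ball (0 : L) ε := by
    rw [Metric.mem_ball, Subtype.dist_eq]
    simpa [dist_eq_norm] using hxε
  have := hball hmem
  simpa [Subtype.ext_iff] using this

/-- A `ℤ`-submodule with a uniform separation radius is discrete. -/
lemma aux_discrete_in (L : Submodule ℤ E)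
    (h : ∃ r > (0 : ℝ), ∀ x ∈ L, ‖x‖ < r → x = 0) :
    DiscreteTopology L := by
  obtain ⟨r, hr, hL⟩ := h
  rw [discreteTopology_iff_isOpen_singleton_zero]
  have hset : ({0} : Set L) = (fun x : L => x.1) ⁻¹' (Metric.ball (0 : E) r) := by
    ext x
    simp only [Set.mem_singleton_iff, Set.mem_preimage, Metric.mem_ball, dist_eq_norm, sub_zero]
    constructor
    · rintro rfl; simpa using hr
    · intro hx; exact Subtype.ext (hL x x.2 hx)
  rw [hset]
  exact Metric.isOpen_ball.preimage continuous_subtype_val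

end Aux

/-- If `Γ` is a lattice (a discrete additive subgroup of `ℝ^d` spanning `ℝ^d`), `F` is a
finite set, and `Θ = F + Γ` satisfies Condition A, then the additive subgroup generated by
`Θ` is discrete. -/
theorem stmt_4 (d : ℕ) (Γ : AddSubgroup (EuclideanSpace ℝ (Fin d)))
    (hdisc : ∃ r > (0 : ℝ), ∀ x ∈ Γ, ‖x‖ < r → x = 0)
    (hspan : Submodule.span ℝ (Γ : Set (EuclideanSpace ℝ (Fin d))) = ⊤)
    (F : Set (EuclideanSpace ℝ (Fin d))) (hF : F.Finite)
    (hA : ConditionA (F + (Γ : Set (EuclideanSpace ℝ (Fin d))))) :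
    ∃ r > (0 : ℝ), ∀ x ∈ AddSubgroup.closure (F + (Γ : Set (EuclideanSpace ℝ (Fin d)))),
      ‖x‖ < r → x = 0 := by
  classical
  have hE : Module.finrank ℝ (EuclideanSpace ℝ (Fin d)) = d := finrank_euclideanSpace_fin
  rcases F.eq_empty_or_nonempty with hFe | ⟨f, hf⟩
  · refine ⟨1, one_pos, fun x hx _ => ?_⟩
    rw [hFe, Set.empty_add, AddSubgroup.closure_empty] at hx
    simpa using hx
  -- the chosen `f` belongs to `Θ`
  have hfΘ : f ∈ F + (Γ : Set (EuclideanSpace ℝ (Fin d))) := by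
    simpa using Set.add_mem_add hf Γ.zero_mem
  have hFΘ : ∀ x ∈ F, x ∈ F + (Γ : Set (EuclideanSpace ℝ (Fin d))) := by
    intro x hx; simpa using Set.add_mem_add hx Γ.zero_mem
  have hγΘ : ∀ γ ∈ Γ, f + γ ∈ F + (Γ : Set (EuclideanSpace ℝ (Fin d))) := fun γ hγ =>
    Set.add_mem_add hf hγ
  -- `Γ` is a discrete `ℤ`-lattice, hence finitely generated
  haveI hdΓ : DiscreteTopology (Γ.toIntSubmodule) := by
    refine aux_discrete_in Γ.toIntSubmodule ?_
    exact hdisc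
  haveI : IsZLattice ℝ Γ.toIntSubmodule := ⟨by simpa using hspan⟩
  obtain ⟨T, hT⟩ := ZLattice.FG ℝ Γ.toIntSubmodule
  have hTΓ : AddSubgroup.closure (↑T : Set (EuclideanSpace ℝ (Fin d))) = Γ := by
    have h1 := Submodule.span_int_eq_addSubgroupClosure (M := EuclideanSpace ℝ (Fin d)) (↑T : Set (EuclideanSpace ℝ (Fin d)))
    rw [hT, AddSubgroup.toIntSubmodule_toAddSubgroup] at h1
    exact h1.symm
  have hTsub : ∀ u ∈ T, u ∈ Γ := by
    intro u hu
    have : u ∈ Submodule.span ℤ (↑T : Set (EuclideanSpace ℝ (Fin d))) := Submodule.subset_span hu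
    rw [hT] at this
    exact this
  -- a maximal linearly independent family inside `Θ`
  obtain ⟨s, hsΘ, hs_span, hs_li⟩ := exists_linearIndependent ℝ (F + (Γ : Set (EuclideanSpace ℝ (Fin d))))
  have hΘspan : Submodule.span ℝ (F + (Γ : Set (EuclideanSpace ℝ (Fin d)))) = ⊤ := by
    rw [eq_top_iff, ← hspan, Submodule.span_le]
    intro γ hγ
    have h1 : f + γ ∈ Submodule.span ℝ (F + (Γ : Set (EuclideanSpace ℝ (Fin d)))) :=
      Submodule.subset_span (hγΘ γ hγ)
    have h2 : f ∈ Submodule.span ℝ (F + (Γ : Set (EuclideanSpace ℝ (Fin d)))) := Submodule.subset_span hfΘ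
    simpa using sub_mem h1 h2
  haveI : Fintype s := hs_li.setFinite.fintype
  let b : Module.Basis s ℝ (EuclideanSpace ℝ (Fin d)) := Module.Basis.mk hs_li (by
    rw [Subtype.range_coe, hs_span, hΘspan])
  have hcard : Fintype.card s = d := by
    rw [← Module.finrank_eq_card_basis b, hE]
  set L : Submodule ℤ (EuclideanSpace ℝ (Fin d)) := Submodule.span ℤ (Set.range ⇑b) with hL
  haveI : DiscreteTopology L := by
    rw [hL]; infer_instance
  have hsL : ∀ x : s, (x : EuclideanSpace ℝ (Fin d)) ∈ L := by
    intro x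
    exact Submodule.subset_span ⟨x, by simp [b]⟩
  -- Condition A gives integer dependencies: every element of `Θ` has a multiple in `L`
  have hΘL : ∀ θ ∈ F + (Γ : Set (EuclideanSpace ℝ (Fin d))), ∃ N : ℤ, N ≠ 0 ∧ N • θ ∈ L := by
    intro θ hθ
    let e : Fin d ≃ s := (Fintype.equivFinOfCardEq hcard).symm
    let v : Fin (d + 1) → EuclideanSpace ℝ (Fin d) := Fin.cons θ (fun i => (e i : EuclideanSpace ℝ (Fin d)))
    have hv : ∀ i, v i ∈ F + (Γ : Set (EuclideanSpace ℝ (Fin d))) := by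
      intro i
      refine Fin.cases ?_ ?_ i
      · exact hθ
      · intro j; exact hsΘ (e j).2
    have hdep : ¬ LinearIndependent ℝ v := by
      intro h
      have := h.fintype_card_le_finrank
      rw [Fintype.card_fin, hE] at this
      omega
    obtain ⟨n, ⟨i0, hi0⟩, hsum⟩ := hA (d + 1) v hv hdep
    rw [Fin.sum_univ_succ] at hsum
    simp only [v, Fin.cons_zero, Fin.cons_succ] at hsum
    by_cases h0 : n 0 = 0
    · exfalso
      rw [h0] at hsum
      simp only [Int.cast_zero, zero_smul, zero_add] at hsum
      have hli : LinearIndependent ℝ (fun i : Fin d => ((e i : s) : EuclideanSpace ℝ (Fin d))) := by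
        have := hs_li.comp e e.injective
        exact this
      have hzero := Fintype.linearIndependent_iff.mp hli (fun i => (n i.succ : ℝ)) hsum
      refine hi0 ?_
      refine Fin.cases h0 (fun j => ?_) i0
      have hj : ((n j.succ : ℝ)) = 0 := hzero j
      exact_mod_cast hj
    · refine ⟨n 0, h0, ?_⟩
      have key : (n 0 : ℤ) • θ = ∑ i : Fin d, (-(n i.succ)) • ((e i : EuclideanSpace ℝ (Fin d))) := by
        have h1 : (n 0 : ℝ) • θ = ∑ i : Fin d, (-(n i.succ : ℝ)) • ((e i : EuclideanSpace ℝ (Fin d))) := by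
          have h2 : (n 0 : ℝ) • θ = -(∑ x : Fin d, (n x.succ : ℝ) • (e x : EuclideanSpace ℝ (Fin d))) :=
            eq_neg_of_add_eq_zero_left hsum
          rw [h2, ← Finset.sum_neg_distrib]
          exact Finset.sum_congr rfl fun i _ => (neg_smul _ _).symm
        calc (n 0 : ℤ) • θ = ((n 0 : ℤ) : ℝ) • θ := (Int.cast_smul_eq_zsmul ℝ _ _).symm
          _ = ∑ i : Fin d, (-(n i.succ : ℝ)) • ((e i : EuclideanSpace ℝ (Fin d))) := h1
          _ = ∑ i : Fin d, (-(n i.succ)) • ((e i : EuclideanSpace ℝ (Fin d))) := by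
              refine Finset.sum_congr rfl fun i _ => ?_
              rw [← Int.cast_smul_eq_zsmul ℝ]
              norm_num
      rw [key]
      exact Submodule.sum_mem _ fun i _ => Submodule.smul_mem _ _ (hsL (e i))
  -- common denominator over the finite generating set
  set U : Finset (EuclideanSpace ℝ (Fin d)) := hF.toFinset ∪ T with hU
  have hUH : ∀ u ∈ U, ∃ N : ℤ, N ≠ 0 ∧ N • u ∈ L := by
    intro u hu
    rcases Finset.mem_union.mp hu with h | h
    · exact hΘL u (hFΘ u (hF.mem_toFinset.mp h))
    · have huΓ : u ∈ Γ := hTsub u h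
      obtain ⟨N₁, hN₁, hL₁⟩ := hΘL (f + u) (hγΘ u huΓ)
      obtain ⟨N₂, hN₂, hL₂⟩ := hΘL f hfΘ
      refine ⟨N₁ * N₂, mul_ne_zero hN₁ hN₂, ?_⟩
      have hrw : (N₁ * N₂) • u = N₂ • (N₁ • (f + u)) - N₁ • (N₂ • f) := by
        rw [smul_add, smul_add, ← mul_smul, ← mul_smul, ← mul_smul, mul_comm N₂ N₁]
        abel
      rw [hrw]
      exact sub_mem (Submodule.smul_mem _ _ hL₁) (Submodule.smul_mem _ _ hL₂)
  choose! N hN0 hNL using hUH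
  set M : ℤ := ∏ u ∈ U, N u with hM
  have hMne : M ≠ 0 := Finset.prod_ne_zero_iff.mpr hN0
  have hMU : ∀ u ∈ U, M • u ∈ L := by
    intro u hu
    obtain ⟨c, hc⟩ := Finset.dvd_prod_of_mem N hu
    rw [hM, hc, mul_comm, mul_smul]
    exact Submodule.smul_mem _ _ (hNL u hu)
  -- the closure of `Θ` is generated by `U`
  have hGU : AddSubgroup.closure (F + (Γ : Set (EuclideanSpace ℝ (Fin d)))) = AddSubgroup.closure (↑U : Set (EuclideanSpace ℝ (Fin d))) := by
    apply le_antisymm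
    · rw [AddSubgroup.closure_le]
      rintro x ⟨a, ha, γ, hγ, rfl⟩
      refine add_mem ?_ ?_
      · exact AddSubgroup.subset_closure (by
          simp only [hU, Finset.coe_union, Set.mem_union]
          exact Or.inl (by rwa [Set.Finite.coe_toFinset]))
      · have h1 : γ ∈ AddSubgroup.closure (↑T : Set (EuclideanSpace ℝ (Fin d))) := by rw [hTΓ]; exact hγ
        exact AddSubgroup.closure_mono (by
          simp only [hU, Finset.coe_union]
          exact Set.subset_union_right) h1
    · rw [AddSubgroup.closure_le]
      intro u hu
      rcases Finset.mem_union.mp (Finset.mem_coe.mp hu) with h | h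
      · exact AddSubgroup.subset_closure (hFΘ u (hF.mem_toFinset.mp h))
      · have huΓ : u ∈ Γ := hTsub u h
        have h1 : f + u ∈ AddSubgroup.closure (F + (Γ : Set (EuclideanSpace ℝ (Fin d)))) :=
          AddSubgroup.subset_closure (hγΘ u huΓ)
        have h2 : f ∈ AddSubgroup.closure (F + (Γ : Set (EuclideanSpace ℝ (Fin d)))) :=
          AddSubgroup.subset_closure hfΘ
        simpa using sub_mem h1 h2
  -- any element of the closure has its `M`-multiple in the lattice `L`
  have hMG : ∀ x ∈ AddSubgroup.closure (F + (Γ : Set (EuclideanSpace ℝ (Fin d)))), M • x ∈ L := by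
    intro x hx
    rw [hGU] at hx
    have hle : AddSubgroup.closure (↑U : Set (EuclideanSpace ℝ (Fin d))) ≤
        (L.toAddSubgroup).comap (DistribMulAction.toAddMonoidHom (EuclideanSpace ℝ (Fin d)) M) := by
      rw [AddSubgroup.closure_le]
      intro u hu
      exact hMU u hu
    exact hle hx
  -- conclude using discreteness of `L`
  obtain ⟨r, hr, hrL⟩ := aux_discrete_out L
  have hc : (0 : ℝ) < |(M : ℝ)| := by
    rw [abs_pos]
    exact_mod_cast hMne
  refine ⟨r / |(M : ℝ)|, div_pos hr hc, fun x hx hxr => ?_⟩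
  have h1 : M • x ∈ L := hMG x hx
  have h2 : ‖M • x‖ < r := by
    rw [← Int.cast_smul_eq_zsmul ℝ, norm_smul, Real.norm_eq_abs]
    calc |(M : ℝ)| * ‖x‖ < |(M : ℝ)| * (r / |(M : ℝ)|) := by
          exact mul_lt_mul_of_pos_left hxr hc
      _ = r := by field_simp
  have h3 : M • x = 0 := hrL _ h1 h2
  have h4 : ((M : ℤ) : ℝ) • x = 0 := by rw [Int.cast_smul_eq_zsmul]; exact h3
  rcases smul_eq_zero.mp h4 with h | h
  · exact absurd h (by exact_mod_cast hMne)
  · exact h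
end

section
/- Let A^0 : ℝ² → ℝ be twice continuously differentiable, let λ ∈ ℝ, and suppose Σ := {ξ ∈ ℝ² : A^0(ξ) = λ} is nonempty and compact. Assume there is ε_0 > 0 with ‖∇A^0(ξ)‖ ≥ ε_0 for all ξ ∈ Σ, and there is ε > 0 such that for all ξ ∈ Σ and all η ∈ ℝ² with ⟨∇A^0(ξ), η⟩ = 0 one has |D²A^0(ξ)(η,η)| ≥ ε‖η‖². Then there is a constant C such that for every unit vector e ∈ ℝ² and every γ ∈ (0,1], the 1-dimensional Hausdorff measure of the set {ξ ∈ Σ : |⟨∇A^0(ξ), e⟩| ≤ γ} is at most Cγ. -/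
open MeasureTheory Set
open scoped ENNReal NNReal

noncomputable def Jrot (x : EuclideanSpace ℝ (Fin 2)) : EuclideanSpace ℝ (Fin 2) :=
  (WithLp.equiv 2 (Fin 2 → ℝ)).symm ![-(x 1), x 0]

lemma Jrot_apply0 (x : EuclideanSpace ℝ (Fin 2)) : Jrot x 0 = -(x 1) := rfl
lemma Jrot_apply1 (x : EuclideanSpace ℝ (Fin 2)) : Jrot x 1 = x 0 := rfl

lemma inner_eq2 (x y : EuclideanSpace ℝ (Fin 2)) :
    (inner ℝ x y : ℝ) = x 0 * y 0 + x 1 * y 1 := by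
  simp [PiLp.inner_apply, Fin.sum_univ_two, mul_comm]

lemma inner_Jrot_self (x : EuclideanSpace ℝ (Fin 2)) : (inner ℝ x (Jrot x) : ℝ) = 0 := by
  rw [inner_eq2, Jrot_apply0, Jrot_apply1]; ring

lemma inner_Jrot_smul (g : EuclideanSpace ℝ (Fin 2)) (c : ℝ) :
    (inner ℝ g (Jrot (c • g)) : ℝ) = 0 := by
  rw [inner_eq2, Jrot_apply0, Jrot_apply1]
  have h0 : (c • g) 0 = c * g 0 := rfl
  have h1 : (c • g) 1 = c * g 1 := rfl
  rw [h0, h1]; ring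

lemma norm_sq2 (G : EuclideanSpace ℝ (Fin 2)) : G 0 * G 0 + G 1 * G 1 = ‖G‖ ^ 2 := by
  rw [← real_inner_self_eq_norm_sq, inner_eq2]

lemma decomp2 (G : EuclideanSpace ℝ (Fin 2)) (hG : ‖G‖ = 1) (v : EuclideanSpace ℝ (Fin 2)) :
    (inner ℝ v (Jrot G) : ℝ) • Jrot G + (inner ℝ v G : ℝ) • G = v := by
  have h1 : G 0 * G 0 + G 1 * G 1 = 1 := by rw [norm_sq2, hG]; norm_num
  ext i
  fin_cases i <;>
    simp only [inner_eq2, Jrot_apply0, Jrot_apply1, PiLp.add_apply, PiLp.smul_apply,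
      smul_eq_mul, Fin.zero_eta, Fin.mk_one]
  · linear_combination v 0 * h1
  · linear_combination v 1 * h1

lemma pyth2 (G : EuclideanSpace ℝ (Fin 2)) (hG : ‖G‖ = 1) (v : EuclideanSpace ℝ (Fin 2)) :
    (inner ℝ v (Jrot G) : ℝ) ^ 2 + (inner ℝ v G : ℝ) ^ 2 = ‖v‖ ^ 2 := by
  have := decomp2 G hG v
  calc (inner ℝ v (Jrot G) : ℝ) ^ 2 + (inner ℝ v G : ℝ) ^ 2
      = (inner ℝ v ((inner ℝ v (Jrot G) : ℝ) • Jrot G + (inner ℝ v G : ℝ) • G) : ℝ) := by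
        rw [inner_add_right, real_inner_smul_right, real_inner_smul_right]; ring
    _ = ‖v‖ ^ 2 := by rw [this, real_inner_self_eq_norm_sq]

lemma norm_Jrot (x : EuclideanSpace ℝ (Fin 2)) : ‖Jrot x‖ = ‖x‖ := by
  have : ‖Jrot x‖ ^ 2 = ‖x‖ ^ 2 := by
    rw [← norm_sq2, ← norm_sq2, Jrot_apply0, Jrot_apply1]; ring
  nlinarith [norm_nonneg (Jrot x), norm_nonneg x, this]

-- gradient / fderiv bridge
lemma grad_inner (A0 : EuclideanSpace ℝ (Fin 2) → ℝ) (ξ w : EuclideanSpace ℝ (Fin 2)) :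
    (inner ℝ (gradient A0 ξ) w : ℝ) = fderiv ℝ A0 ξ w :=
  InnerProductSpace.toDual_symm_apply

open MeasureTheory Set
open scoped ENNReal NNReal

variable {A0 : EuclideanSpace ℝ (Fin 2) → ℝ}

lemma mvt1 (hA0 : ContDiff ℝ 2 A0) (ξ η : EuclideanSpace ℝ (Fin 2))
    (hval : A0 η = A0 ξ) :
    ∃ c ∈ Icc (0:ℝ) 1, fderiv ℝ A0 (ξ + c • (η - ξ)) (η - ξ) = 0 := by
  set v := η - ξ with hv
  have hdiff : Differentiable ℝ A0 := hA0.differentiable (by norm_num)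
  have hline : ∀ t : ℝ, HasDerivAt (fun t : ℝ => ξ + t • v) v t := by
    intro t
    simpa using ((hasDerivAt_id t).smul_const v).const_add ξ
  have hD : ∀ t : ℝ, HasDerivAt (fun t => A0 (ξ + t • v))
      (fderiv ℝ A0 (ξ + t • v) v) t := by
    intro t
    exact ((hdiff (ξ + t • v)).hasFDerivAt).comp_hasDerivAt t (hline t)
  obtain ⟨c, hc, hceq⟩ := exists_hasDerivAt_eq_slope (fun t => A0 (ξ + t • v))
    (fun t => fderiv ℝ A0 (ξ + t • v) v) zero_lt_one
    (fun t _ => (hD t).continuousAt.continuousWithinAt)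
    (fun t _ => hD t)
  refine ⟨c, ⟨le_of_lt hc.1, le_of_lt hc.2⟩, ?_⟩
  rw [hceq]
  simp [hv, hval]

lemma mvt2 (hA0 : ContDiff ℝ 2 A0) (ξ η w : EuclideanSpace ℝ (Fin 2)) :
    ∃ c ∈ Icc (0:ℝ) 1,
      fderiv ℝ A0 η w - fderiv ℝ A0 ξ w
        = fderiv ℝ (fderiv ℝ A0) (ξ + c • (η - ξ)) (η - ξ) w := by
  set v := η - ξ with hv
  have hF1 : ContDiff ℝ 1 (fderiv ℝ A0) := hA0.fderiv_right (by norm_num)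
  have hF1d : Differentiable ℝ (fderiv ℝ A0) := hF1.differentiable one_ne_zero
  have hline : ∀ t : ℝ, HasDerivAt (fun t : ℝ => ξ + t • v) v t := by
    intro t
    simpa using ((hasDerivAt_id t).smul_const v).const_add ξ
  have hφ : ∀ ζ, HasFDerivAt (fun ζ => fderiv ℝ A0 ζ w)
      ((ContinuousLinearMap.apply ℝ ℝ w).comp (fderiv ℝ (fderiv ℝ A0) ζ)) ζ := by
    intro ζ
    exact (ContinuousLinearMap.apply ℝ ℝ w).hasFDerivAt.comp ζ (hF1d ζ).hasFDerivAt
  have hD : ∀ t : ℝ, HasDerivAt (fun t => fderiv ℝ A0 (ξ + t • v) w)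
      (fderiv ℝ (fderiv ℝ A0) (ξ + t • v) v w) t := by
    intro t
    exact (hφ (ξ + t • v)).comp_hasDerivAt t (hline t)
  obtain ⟨c, hc, hceq⟩ := exists_hasDerivAt_eq_slope (fun t => fderiv ℝ A0 (ξ + t • v) w)
    (fun t => fderiv ℝ (fderiv ℝ A0) (ξ + t • v) v w) zero_lt_one
    (fun t _ => (hD t).continuousAt.continuousWithinAt)
    (fun t _ => hD t)
  refine ⟨c, ⟨le_of_lt hc.1, le_of_lt hc.2⟩, ?_⟩
  rw [hceq]
  simp [hv]

lemma seg_mem_ball {x ξ η : EuclideanSpace ℝ (Fin 2)} {r : ℝ} {c : ℝ}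
    (hc : c ∈ Icc (0:ℝ) 1) (hξ : ξ ∈ Metric.ball x r) (hη : η ∈ Metric.ball x r) :
    ξ + c • (η - ξ) ∈ Metric.ball x r := by
  have : ξ + c • (η - ξ) = (1 - c) • ξ + c • η := by
    rw [smul_sub, sub_smul, one_smul]; abel
  rw [this]
  exact (convex_ball x r) hξ hη (by linarith [hc.1, hc.2]) hc.1 (by ring)

set_option maxHeartbeats 2000000 in
/-- Expansion claim: on a small ball around `x ∈ Σ`, `Σ` expands onto its projection
to the tangent direction at `x`, with constant 2. -/
lemma expand_claim (hA0 : ContDiff ℝ 2 A0) (lam ε₀ : ℝ) (hε₀ : 0 < ε₀)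
    (hgrad : ∀ ξ, A0 ξ = lam → ε₀ ≤ ‖gradient A0 ξ‖)
    (B : Set (EuclideanSpace ℝ (Fin 2))) (M₂ : ℝ) (hM₂1 : 1 ≤ M₂)
    (hLip : ∀ p ∈ B, ∀ q ∈ B, ‖fderiv ℝ A0 p - fderiv ℝ A0 q‖ ≤ M₂ * ‖p - q‖)
    (x : EuclideanSpace ℝ (Fin 2)) (hx : A0 x = lam) (ρ : ℝ) (hρ : 0 < ρ)
    (hρM : 2 * ρ ≤ ε₀ / (2 * M₂))
    (hball : Metric.ball x ρ ⊆ B)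
    (ξ η : EuclideanSpace ℝ (Fin 2)) (hξ : A0 ξ = lam) (hη : A0 η = lam)
    (hξb : ξ ∈ Metric.ball x ρ) (hηb : η ∈ Metric.ball x ρ) :
    ‖ξ - η‖ ≤ 2 * |(inner ℝ ξ (Jrot (‖gradient A0 x‖⁻¹ • gradient A0 x)) : ℝ)
      - (inner ℝ η (Jrot (‖gradient A0 x‖⁻¹ • gradient A0 x)) : ℝ)| := by
  have hM₂0 : 0 < M₂ := lt_of_lt_of_le one_pos hM₂1
  set g := gradient A0 x with hg
  have hgε₀ : ε₀ ≤ ‖g‖ := hgrad x hx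
  have hgne : g ≠ 0 := by
    intro h; rw [h, norm_zero] at hgε₀; linarith
  set G : EuclideanSpace ℝ (Fin 2) := ‖g‖⁻¹ • g with hGdef
  have hG1 : ‖G‖ = 1 := norm_smul_inv_norm hgne
  set T := Jrot G with hT
  have hT1 : ‖T‖ = 1 := by rw [hT, norm_Jrot, hG1]
  set v := η - ξ with hv
  obtain ⟨c, hc, h0⟩ := mvt1 hA0 ξ η (by rw [hη, hξ])
  set ζ := ξ + c • (η - ξ) with hζ
  have hζb : ζ ∈ Metric.ball x ρ := seg_mem_ball hc hξb hηb
  have hζB : ζ ∈ B := hball hζb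
  have hxB : x ∈ B := hball (Metric.mem_ball_self hρ)
  set a : ℝ := (inner ℝ v T : ℝ) with ha
  set b : ℝ := (inner ℝ v G : ℝ) with hb
  have hva : v = a • T + b • G := (decomp2 G hG1 v).symm
  -- F1 x T = 0 and F1 x G = ‖g‖
  have hgT : fderiv ℝ A0 x T = 0 := by
    rw [← grad_inner, ← hg, hT, hGdef]
    exact inner_Jrot_smul g _
  have hgG : fderiv ℝ A0 x G = ‖g‖ := by
    rw [← grad_inner, ← hg, hGdef, real_inner_smul_right, real_inner_self_eq_norm_sq]
    field_simp [norm_ne_zero_iff.mpr hgne]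
  -- Lipschitz estimates
  have hdistζx : ‖ζ - x‖ ≤ ρ := by
    have := Metric.mem_ball.mp hζb
    rw [dist_eq_norm] at this; linarith
  have hLipζ : ‖fderiv ℝ A0 ζ - fderiv ℝ A0 x‖ ≤ ε₀ / 4 := by
    calc ‖fderiv ℝ A0 ζ - fderiv ℝ A0 x‖ ≤ M₂ * ‖ζ - x‖ := hLip ζ hζB x hxB
      _ ≤ M₂ * ρ := by gcongr
      _ ≤ ε₀ / 4 := by
          have h := (le_div_iff₀ (by positivity : (0:ℝ) < 2 * M₂)).mp hρM
          nlinarith [hρ, hM₂0]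
  have hfT : |fderiv ℝ A0 ζ T| ≤ ε₀ / 4 := by
    have h1 : fderiv ℝ A0 ζ T = (fderiv ℝ A0 ζ - fderiv ℝ A0 x) T := by
      rw [ContinuousLinearMap.sub_apply, hgT, sub_zero]
    rw [h1]
    calc |(fderiv ℝ A0 ζ - fderiv ℝ A0 x) T| ≤ ‖fderiv ℝ A0 ζ - fderiv ℝ A0 x‖ * ‖T‖ :=
          (fderiv ℝ A0 ζ - fderiv ℝ A0 x).le_opNorm T
      _ ≤ ε₀ / 4 := by rw [hT1, mul_one]; exact hLipζ
  have hfG : 3 * ε₀ / 4 ≤ fderiv ℝ A0 ζ G := by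
    have h1 : |fderiv ℝ A0 ζ G - fderiv ℝ A0 x G| ≤ ε₀ / 4 := by
      have : fderiv ℝ A0 ζ G - fderiv ℝ A0 x G = (fderiv ℝ A0 ζ - fderiv ℝ A0 x) G := by
        rw [ContinuousLinearMap.sub_apply]
      rw [this]
      calc |(fderiv ℝ A0 ζ - fderiv ℝ A0 x) G| ≤ ‖fderiv ℝ A0 ζ - fderiv ℝ A0 x‖ * ‖G‖ :=
            (fderiv ℝ A0 ζ - fderiv ℝ A0 x).le_opNorm G
        _ ≤ ε₀ / 4 := by rw [hG1, mul_one]; exact hLipζ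
    rw [hgG] at h1
    have := abs_le.mp h1
    linarith [this.1]
  -- the relation a * F1ζT + b * F1ζG = 0
  have h0' : a * fderiv ℝ A0 ζ T + b * fderiv ℝ A0 ζ G = 0 := by
    have h5 := h0
    rw [← hv, hva, map_add, ContinuousLinearMap.map_smul, ContinuousLinearMap.map_smul] at h5
    simpa [smul_eq_mul] using h5
  have hba : |b| ≤ |a| := by
    have h2 : |b| * (3 * ε₀ / 4) ≤ |b| * fderiv ℝ A0 ζ G := by
      apply mul_le_mul_of_nonneg_left hfG (abs_nonneg b)
    have h3 : |b * fderiv ℝ A0 ζ G| = |a * fderiv ℝ A0 ζ T| := by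
      have : b * fderiv ℝ A0 ζ G = -(a * fderiv ℝ A0 ζ T) := by linarith
      rw [this, abs_neg]
    have h4 : |b| * fderiv ℝ A0 ζ G ≤ |a| * (ε₀ / 4) := by
      calc |b| * fderiv ℝ A0 ζ G = |b * fderiv ℝ A0 ζ G| := by
            rw [abs_mul, abs_of_nonneg (by linarith : (0:ℝ) ≤ fderiv ℝ A0 ζ G)]
        _ = |a| * |fderiv ℝ A0 ζ T| := by rw [h3, abs_mul]
        _ ≤ |a| * (ε₀ / 4) := mul_le_mul_of_nonneg_left hfT (abs_nonneg a)
    nlinarith [abs_nonneg a, abs_nonneg b]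
  have hpyth : a ^ 2 + b ^ 2 = ‖v‖ ^ 2 := by rw [ha, hb, hT]; exact pyth2 G hG1 v
  have hnv : ‖ξ - η‖ = ‖v‖ := by rw [hv, norm_sub_rev]
  have haval : (inner ℝ ξ (Jrot G) : ℝ) - (inner ℝ η (Jrot G) : ℝ) = -a := by
    rw [ha, hv, hT, inner_sub_left]; ring
  rw [hnv, haval, abs_neg]
  have hb2 : b ^ 2 ≤ a ^ 2 := by nlinarith [abs_nonneg a, abs_nonneg b, sq_abs a, sq_abs b]
  have hv2 : ‖v‖ ^ 2 ≤ (2 * |a|) ^ 2 := by nlinarith [sq_abs a]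
  have hsum : (0:ℝ) ≤ ‖v‖ + 2 * |a| := by positivity
  nlinarith [hv2, hsum, norm_nonneg v, abs_nonneg a]
lemma abs_le_of_sq_le_sq2 (x y : ℝ) (hy : 0 ≤ y) (h : x ^ 2 ≤ y ^ 2) : |x| ≤ y := by
  by_contra hc
  push_neg at hc
  nlinarith [abs_nonneg x, sq_abs x]

lemma le_abs_of_sq_le_sq2 (x y : ℝ) (hx : 0 ≤ x) (h : x ^ 2 ≤ y ^ 2) : x ≤ |y| := by
  by_contra hc
  push_neg at hc
  nlinarith [abs_nonneg y, sq_abs y]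

lemma abs_add4 (w x y z : ℝ) : |w + x + y + z| ≤ |w| + |x| + |y| + |z| := by
  calc |w + x + y + z| ≤ |w + x + y| + |z| := abs_add_le _ _
    _ ≤ (|w + x| + |y|) + |z| := by linarith [abs_add_le (w + x) y]
    _ ≤ ((|w| + |x|) + |y|) + |z| := by linarith [abs_add_le w x]

set_option maxHeartbeats 2000000 in
/-- Pairwise estimate: two near-tangency points on `Σ` that are close to each other
are within `32γ/ε` of each other. -/
lemma pair_claim {A0 : EuclideanSpace ℝ (Fin 2) → ℝ} (hA0 : ContDiff ℝ 2 A0)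
    (lam ε₀ ε : ℝ) (hε₀ : 0 < ε₀) (hε : 0 < ε)
    (hgrad : ∀ ξ, A0 ξ = lam → ε₀ ≤ ‖gradient A0 ξ‖)
    (hconv : ∀ ξ, A0 ξ = lam → ∀ η : EuclideanSpace ℝ (Fin 2),
      (inner ℝ (gradient A0 ξ) η : ℝ) = 0 →
        ε * ‖η‖ ^ 2 ≤ |iteratedFDeriv ℝ 2 A0 ξ ![η, η]|)
    (B : Set (EuclideanSpace ℝ (Fin 2))) (M₂ : ℝ) (hM₂1 : 1 ≤ M₂)
    (hM₂ : ∀ p ∈ B, ‖fderiv ℝ (fderiv ℝ A0) p‖ ≤ M₂)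
    (hLip : ∀ p ∈ B, ∀ q ∈ B, ‖fderiv ℝ A0 p - fderiv ℝ A0 q‖ ≤ M₂ * ‖p - q‖)
    (δ₂ : ℝ)
    (hδ₂ : ∀ p ∈ B, ∀ q ∈ B, dist p q < δ₂ →
      ‖fderiv ℝ (fderiv ℝ A0) p - fderiv ℝ (fderiv ℝ A0) q‖ < ε / 16)
    (e : EuclideanSpace ℝ (Fin 2)) (he : ‖e‖ = 1) (γ : ℝ) (hγpos : 0 < γ)
    (hγ₀a : γ ≤ ε₀ / 2) (hγ₀b : γ ≤ ε * ε₀ / (16 * M₂))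
    (ξ η : EuclideanSpace ℝ (Fin 2)) (hξ : A0 ξ = lam) (hη : A0 η = lam)
    (hξe : |fderiv ℝ A0 ξ e| ≤ γ) (hηe : |fderiv ℝ A0 η e| ≤ γ)
    (hsegB : ∀ c ∈ Set.Icc (0:ℝ) 1, ξ + c • (η - ξ) ∈ B)
    (hr1 : ‖η - ξ‖ ≤ ε₀ / (2 * M₂))
    (hr2 : ‖η - ξ‖ ≤ ε * ε₀ / (32 * M₂ ^ 2))
    (hr3 : ‖η - ξ‖ < δ₂) :
    ‖η - ξ‖ ≤ 32 * γ / ε := by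
  have hM₂0 : 0 < M₂ := lt_of_lt_of_le one_pos hM₂1
  set g := gradient A0 ξ with hg
  have hgε₀ : ε₀ ≤ ‖g‖ := hgrad ξ hξ
  have hgne : g ≠ 0 := by
    intro h; rw [h, norm_zero] at hgε₀; linarith
  set G : EuclideanSpace ℝ (Fin 2) := ‖g‖⁻¹ • g with hGdef
  have hG1 : ‖G‖ = 1 := norm_smul_inv_norm hgne
  set T := Jrot G with hT
  have hT1 : ‖T‖ = 1 := by rw [hT, norm_Jrot, hG1]
  set v := η - ξ with hv
  set r := ‖v‖ with hrdef
  have hr0 : 0 ≤ r := norm_nonneg v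
  have hξB : ξ ∈ B := by
    have := hsegB 0 ⟨le_rfl, zero_le_one⟩
    simpa using this
  -- decompositions
  set a : ℝ := (inner ℝ v T : ℝ) with ha
  set b : ℝ := (inner ℝ v G : ℝ) with hb
  set α : ℝ := (inner ℝ e T : ℝ) with hα
  set β : ℝ := (inner ℝ e G : ℝ) with hβ
  have hva : v = a • T + b • G := (decomp2 G hG1 v).symm
  have hea : e = α • T + β • G := (decomp2 G hG1 e).symm
  have hpv : a ^ 2 + b ^ 2 = r ^ 2 := by rw [ha, hb, hT, hrdef]; exact pyth2 G hG1 v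
  have hpe : α ^ 2 + β ^ 2 = 1 := by
    rw [hα, hβ, hT]
    rw [pyth2 G hG1 e, he]; norm_num
  -- relation between b, β and pairings with g
  have hgb : ‖g‖ * b = fderiv ℝ A0 ξ v := by
    rw [hb, hGdef, real_inner_smul_right, ← mul_assoc,
      mul_inv_cancel₀ (norm_ne_zero_iff.mpr hgne), one_mul, real_inner_comm]
    exact grad_inner A0 ξ v
  have hgβ : ‖g‖ * β = fderiv ℝ A0 ξ e := by
    rw [hβ, hGdef, real_inner_smul_right, ← mul_assoc,
      mul_inv_cancel₀ (norm_ne_zero_iff.mpr hgne), one_mul, real_inner_comm]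
    exact grad_inner A0 ξ e
  -- Step (i)
  obtain ⟨c₁, hc₁, h01⟩ := mvt1 hA0 ξ η (by rw [hη, hξ])
  have hζ₁B : ξ + c₁ • (η - ξ) ∈ B := hsegB c₁ hc₁
  have hFξv : |fderiv ℝ A0 ξ v| ≤ M₂ * r ^ 2 := by
    have h1 : fderiv ℝ A0 ξ v = (fderiv ℝ A0 ξ - fderiv ℝ A0 (ξ + c₁ • (η - ξ))) v := by
      rw [ContinuousLinearMap.sub_apply, ← hv] at *
      rw [h01, sub_zero]
    rw [h1]
    have h2 : ‖ξ - (ξ + c₁ • (η - ξ))‖ ≤ r := by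
      rw [hrdef, hv]
      have : ξ - (ξ + c₁ • (η - ξ)) = -(c₁ • (η - ξ)) := by abel
      rw [this, norm_neg, norm_smul, Real.norm_eq_abs, abs_of_nonneg hc₁.1]
      nlinarith [norm_nonneg (η - ξ), hc₁.1, hc₁.2]
    calc |(fderiv ℝ A0 ξ - fderiv ℝ A0 (ξ + c₁ • (η - ξ))) v|
        = ‖(fderiv ℝ A0 ξ - fderiv ℝ A0 (ξ + c₁ • (η - ξ))) v‖ := (Real.norm_eq_abs _).symm
      _ ≤ ‖fderiv ℝ A0 ξ - fderiv ℝ A0 (ξ + c₁ • (η - ξ))‖ * ‖v‖ :=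
          ContinuousLinearMap.le_opNorm _ v
      _ ≤ (M₂ * ‖ξ - (ξ + c₁ • (η - ξ))‖) * r := by
          rw [← hrdef]
          exact mul_le_mul_of_nonneg_right (hLip ξ hξB _ hζ₁B) hr0
      _ ≤ M₂ * r ^ 2 := by
          have := mul_le_mul_of_nonneg_right (mul_le_mul_of_nonneg_left h2 hM₂0.le) hr0
          calc (M₂ * ‖ξ - (ξ + c₁ • (η - ξ))‖) * r ≤ (M₂ * r) * r := this
            _ = M₂ * r ^ 2 := by ring
  have f1 : ε₀ * |b| ≤ M₂ * r ^ 2 := by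
    calc ε₀ * |b| ≤ ‖g‖ * |b| := mul_le_mul_of_nonneg_right hgε₀ (abs_nonneg b)
      _ = |‖g‖ * b| := by rw [abs_mul, abs_of_nonneg (norm_nonneg g)]
      _ = |fderiv ℝ A0 ξ v| := by rw [hgb]
      _ ≤ M₂ * r ^ 2 := hFξv
  have f2 : ε₀ * |β| ≤ γ := by
    calc ε₀ * |β| ≤ ‖g‖ * |β| := mul_le_mul_of_nonneg_right hgε₀ (abs_nonneg β)
      _ = |‖g‖ * β| := by rw [abs_mul, abs_of_nonneg (norm_nonneg g)]
      _ = |fderiv ℝ A0 ξ e| := by rw [hgβ]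
      _ ≤ γ := hξe
  -- Step (ii)
  obtain ⟨c₂, hc₂, h02⟩ := mvt2 hA0 ξ η e
  set D2 := fderiv ℝ (fderiv ℝ A0) with hD2
  have hζ₂B : ξ + c₂ • (η - ξ) ∈ B := hsegB c₂ hc₂
  have hD2ζ : |D2 (ξ + c₂ • (η - ξ)) v e| ≤ 2 * γ := by
    rw [← hv] at h02
    rw [← h02]
    calc |fderiv ℝ A0 η e - fderiv ℝ A0 ξ e| ≤ |fderiv ℝ A0 η e| + |fderiv ℝ A0 ξ e| :=
          abs_sub _ _
      _ ≤ 2 * γ := by linarith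
  -- Step (iii)
  have hD2close : ‖D2 ξ - D2 (ξ + c₂ • (η - ξ))‖ ≤ ε / 16 := by
    have hd : dist ξ (ξ + c₂ • (η - ξ)) < δ₂ := by
      rw [dist_eq_norm]
      have h3 : ξ - (ξ + c₂ • (η - ξ)) = -(c₂ • (η - ξ)) := by abel
      rw [h3, norm_neg, norm_smul, Real.norm_eq_abs, abs_of_nonneg hc₂.1]
      calc c₂ * ‖η - ξ‖ ≤ 1 * ‖η - ξ‖ :=
            mul_le_mul_of_nonneg_right hc₂.2 (norm_nonneg _)
        _ < δ₂ := by rw [one_mul]; exact hr3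
    exact le_of_lt (hδ₂ ξ hξB _ hζ₂B hd)
  have hD2ξve : |D2 ξ v e| ≤ 2 * γ + ε / 16 * r := by
    have h4 : D2 ξ v e = D2 (ξ + c₂ • (η - ξ)) v e + (D2 ξ - D2 (ξ + c₂ • (η - ξ))) v e := by
      simp [ContinuousLinearMap.sub_apply]
    rw [h4]
    have h5 : |(D2 ξ - D2 (ξ + c₂ • (η - ξ))) v e| ≤ ε / 16 * r := by
      calc |(D2 ξ - D2 (ξ + c₂ • (η - ξ))) v e|
          = ‖(D2 ξ - D2 (ξ + c₂ • (η - ξ))) v e‖ := (Real.norm_eq_abs _).symm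
        _ ≤ ‖D2 ξ - D2 (ξ + c₂ • (η - ξ))‖ * ‖v‖ * ‖e‖ :=
            ContinuousLinearMap.le_opNorm₂ _ v e
        _ = ‖D2 ξ - D2 (ξ + c₂ • (η - ξ))‖ * r := by rw [he, mul_one, hrdef]
        _ ≤ ε / 16 * r := mul_le_mul_of_nonneg_right hD2close hr0
    calc |D2 (ξ + c₂ • (η - ξ)) v e + (D2 ξ - D2 (ξ + c₂ • (η - ξ))) v e|
        ≤ |D2 (ξ + c₂ • (η - ξ)) v e| + |(D2 ξ - D2 (ξ + c₂ • (η - ξ))) v e| := abs_add_le _ _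
      _ ≤ 2 * γ + ε / 16 * r := add_le_add hD2ζ h5
  -- strong convexity at ξ
  have hgT0 : (inner ℝ g T : ℝ) = 0 := by
    rw [hT, hGdef]
    exact inner_Jrot_smul g _
  have hTT : ε ≤ |D2 ξ T T| := by
    have h6 := hconv ξ hξ T (hg ▸ hgT0)
    rw [hT1] at h6
    have h7 : iteratedFDeriv ℝ 2 A0 ξ ![T, T] = D2 ξ T T := by
      rw [iteratedFDeriv_two_apply]
      simp [hD2]
    rw [h7] at h6
    linarith [h6]
  -- bilinear expansion
  have hexp : D2 ξ v e = a * α * (D2 ξ T T) + a * β * (D2 ξ T G)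
      + b * α * (D2 ξ G T) + b * β * (D2 ξ G G) := by
    conv_lhs => rw [hva, hea]
    rw [map_add, ContinuousLinearMap.map_smul, ContinuousLinearMap.map_smul]
    simp only [ContinuousLinearMap.add_apply, ContinuousLinearMap.smul_apply, map_add,
      ContinuousLinearMap.map_smul, smul_eq_mul]
    ring
  -- cross bounds
  have hbound : ∀ u w : EuclideanSpace ℝ (Fin 2), ‖u‖ = 1 → ‖w‖ = 1 → |D2 ξ u w| ≤ M₂ := by
    intro u w hu hw
    calc |D2 ξ u w| = ‖D2 ξ u w‖ := (Real.norm_eq_abs _).symm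
      _ ≤ ‖D2 ξ‖ * ‖u‖ * ‖w‖ := ContinuousLinearMap.le_opNorm₂ _ u w
      _ = ‖D2 ξ‖ := by rw [hu, hw, mul_one, mul_one]
      _ ≤ M₂ := hM₂ ξ hξB
  -- upper bound pieces
  have haub : |a| ≤ r := abs_le_of_sq_le_sq2 a r hr0 (by linarith [hpv, sq_nonneg b])
  have hαub : |α| ≤ 1 := abs_le_of_sq_le_sq2 α 1 one_pos.le
    (by rw [one_pow]; linarith [hpe, sq_nonneg β])
  have hβub : |β| ≤ 1 := abs_le_of_sq_le_sq2 β 1 one_pos.le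
    (by rw [one_pow]; linarith [hpe, sq_nonneg α])
  -- lower bounds on |a| and |α|
  have hαlb : 1 / 2 ≤ |α| := by
    have hβhalf : |β| ≤ 1 / 2 := by
      have h20 : ε₀ * |β| ≤ ε₀ * (1 / 2) := by linarith [f2, hγ₀a]
      exact le_of_mul_le_mul_left h20 hε₀
    have hβsq : β ^ 2 ≤ (1/2) ^ 2 := by
      rw [← sq_abs]
      exact pow_le_pow_left₀ (abs_nonneg β) hβhalf 2
    exact le_abs_of_sq_le_sq2 (1/2) α (by norm_num) (by linarith [hpe, hβsq])
  have hblr : |b| ≤ r / 2 := by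
    have h9 : M₂ * r ≤ ε₀ / 2 := by
      have h9a := mul_le_mul_of_nonneg_left hr1 hM₂0.le
      have heq : M₂ * (ε₀ / (2 * M₂)) = ε₀ / 2 := by field_simp
      linarith [heq ▸ h9a]
    have h8 : ε₀ * |b| ≤ ε₀ * (r / 2) := by
      calc ε₀ * |b| ≤ M₂ * r ^ 2 := f1
        _ = (M₂ * r) * r := by ring
        _ ≤ (ε₀ / 2) * r := mul_le_mul_of_nonneg_right h9 hr0
        _ = ε₀ * (r / 2) := by ring
    exact le_of_mul_le_mul_left h8 hε₀
  have halb : r / 2 ≤ |a| := by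
    have hbsq : b ^ 2 ≤ (r/2) ^ 2 := by
      rw [← sq_abs]
      exact pow_le_pow_left₀ (abs_nonneg b) hblr 2
    exact le_abs_of_sq_le_sq2 (r/2) a (by positivity) (by linarith [hpv, hbsq, sq_nonneg r])
  -- triangle inequality assembly
  have htri : |a| * |α| * |D2 ξ T T| ≤ |D2 ξ v e| + M₂ * (|a| * |β|)
      + M₂ * (|b| * |α|) + M₂ * (|b| * |β|) := by
    have h10 : a * α * (D2 ξ T T) = D2 ξ v e + (-(a * β * (D2 ξ T G)))
        + (-(b * α * (D2 ξ G T))) + (-(b * β * (D2 ξ G G))) := by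
      rw [hexp]; ring
    have h11 : |a| * |α| * |D2 ξ T T| = |a * α * (D2 ξ T T)| := by
      rw [abs_mul, abs_mul]
    rw [h11, h10]
    have h12 := abs_add4 (D2 ξ v e) (-(a * β * (D2 ξ T G))) (-(b * α * (D2 ξ G T)))
      (-(b * β * (D2 ξ G G)))
    have h13 : |a * β * (D2 ξ T G)| ≤ M₂ * (|a| * |β|) := by
      rw [abs_mul, abs_mul]
      calc |a| * |β| * |D2 ξ T G| ≤ |a| * |β| * M₂ :=
            mul_le_mul_of_nonneg_left (hbound T G hT1 hG1) (by positivity)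
        _ = M₂ * (|a| * |β|) := by ring
    have h14 : |b * α * (D2 ξ G T)| ≤ M₂ * (|b| * |α|) := by
      rw [abs_mul, abs_mul]
      calc |b| * |α| * |D2 ξ G T| ≤ |b| * |α| * M₂ :=
            mul_le_mul_of_nonneg_left (hbound G T hG1 hT1) (by positivity)
        _ = M₂ * (|b| * |α|) := by ring
    have h15 : |b * β * (D2 ξ G G)| ≤ M₂ * (|b| * |β|) := by
      rw [abs_mul, abs_mul]
      calc |b| * |β| * |D2 ξ G G| ≤ |b| * |β| * M₂ :=
            mul_le_mul_of_nonneg_left (hbound G G hG1 hG1) (by positivity)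
        _ = M₂ * (|b| * |β|) := by ring
    rw [abs_neg] at h12
    simp only [abs_neg] at h12
    linarith [h12, h13, h14, h15]
  -- lower bound for LHS
  have hlow : r / 2 * (1 / 2) * ε ≤ |a| * |α| * |D2 ξ T T| := by
    have h16 : r / 2 * (1 / 2) ≤ |a| * |α| :=
      mul_le_mul halb hαlb (by norm_num) (abs_nonneg a)
    calc r / 2 * (1 / 2) * ε ≤ (|a| * |α|) * ε :=
          mul_le_mul_of_nonneg_right h16 hε.le
      _ ≤ (|a| * |α|) * |D2 ξ T T| :=
          mul_le_mul_of_nonneg_left hTT (by positivity)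
  -- final numeric assembly
  have hP1 : ε₀ * (|a| * |β|) ≤ r * γ := by
    calc ε₀ * (|a| * |β|) = |a| * (ε₀ * |β|) := by ring
      _ ≤ |a| * γ := mul_le_mul_of_nonneg_left f2 (abs_nonneg a)
      _ ≤ r * γ := mul_le_mul_of_nonneg_right haub hγpos.le
  have hP2 : ε₀ * (|b| * |α|) ≤ M₂ * r ^ 2 := by
    calc ε₀ * (|b| * |α|) = (ε₀ * |b|) * |α| := by ring
      _ ≤ (M₂ * r ^ 2) * |α| := mul_le_mul_of_nonneg_right f1 (abs_nonneg α)
      _ ≤ (M₂ * r ^ 2) * 1 := mul_le_mul_of_nonneg_left hαub (by positivity)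
      _ = M₂ * r ^ 2 := mul_one _
  have hP3 : ε₀ * (|b| * |β|) ≤ M₂ * r ^ 2 := by
    calc ε₀ * (|b| * |β|) = (ε₀ * |b|) * |β| := by ring
      _ ≤ (M₂ * r ^ 2) * |β| := mul_le_mul_of_nonneg_right f1 (abs_nonneg β)
      _ ≤ (M₂ * r ^ 2) * 1 := mul_le_mul_of_nonneg_left hβub (by positivity)
      _ = M₂ * r ^ 2 := mul_one _
  have hq1 : M₂ * (r * γ) ≤ ε * ε₀ / 16 * r := by
    have h17 : M₂ * γ ≤ ε * ε₀ / 16 := by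
      have h17a := mul_le_mul_of_nonneg_left hγ₀b hM₂0.le
      have heq : M₂ * (ε * ε₀ / (16 * M₂)) = ε * ε₀ / 16 := by field_simp
      linarith [heq ▸ h17a]
    calc M₂ * (r * γ) = (M₂ * γ) * r := by ring
      _ ≤ (ε * ε₀ / 16) * r := mul_le_mul_of_nonneg_right h17 hr0
  have hq2 : M₂ * (M₂ * r ^ 2) ≤ ε * ε₀ / 32 * r := by
    have h18 : M₂ ^ 2 * r ≤ ε * ε₀ / 32 := by
      have h18a := mul_le_mul_of_nonneg_left hr2 (by positivity : (0:ℝ) ≤ M₂ ^ 2)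
      have heq : M₂ ^ 2 * (ε * ε₀ / (32 * M₂ ^ 2)) = ε * ε₀ / 32 := by field_simp
      linarith [heq ▸ h18a]
    calc M₂ * (M₂ * r ^ 2) = (M₂ ^ 2 * r) * r := by ring
      _ ≤ (ε * ε₀ / 32) * r := mul_le_mul_of_nonneg_right h18 hr0
  -- combine: multiply the chain by ε₀
  have hchain : r / 2 * (1 / 2) * ε ≤ 2 * γ + ε / 16 * r + M₂ * (|a| * |β|)
      + M₂ * (|b| * |α|) + M₂ * (|b| * |β|) := by linarith [hlow, htri, hD2ξve]
  have HC := mul_le_mul_of_nonneg_left hchain hε₀.le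
  have hP1' := mul_le_mul_of_nonneg_left hP1 hM₂0.le
  have hP2' := mul_le_mul_of_nonneg_left hP2 hM₂0.le
  have hP3' := mul_le_mul_of_nonneg_left hP3 hM₂0.le
  have hring : ε₀ * (2 * γ + ε / 16 * r + M₂ * (|a| * |β|) + M₂ * (|b| * |α|)
      + M₂ * (|b| * |β|))
      = ε₀ * (2 * γ + ε / 16 * r) + M₂ * (ε₀ * (|a| * |β|)) + M₂ * (ε₀ * (|b| * |α|))
      + M₂ * (ε₀ * (|b| * |β|)) := by ring
  have hbig : ε₀ * (r / 2 * (1 / 2) * ε) ≤ ε₀ * (2 * γ + ε / 16 * r) + M₂ * (r * γ)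
      + M₂ * (M₂ * r ^ 2) + M₂ * (M₂ * r ^ 2) := by
    linarith [HC, hring ▸ HC, hP1', hP2', hP3', hring]
  have hfin : ε₀ * (ε * r) ≤ ε₀ * (32 * γ) := by linarith [hbig, hq1, hq2]
  have hfin2 : ε * r ≤ 32 * γ := le_of_mul_le_mul_left hfin hε₀
  rw [le_div_iff₀ hε]
  linarith [hfin2]


lemma measure_le_of_expand (F : Set (EuclideanSpace ℝ (Fin 2))) (T : EuclideanSpace ℝ (Fin 2))
    (hT : ‖T‖ = 1)
    (hexp : ∀ x ∈ F, ∀ y ∈ F, ‖x - y‖ ≤ 2 * |(inner ℝ x T : ℝ) - (inner ℝ y T : ℝ)|)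
    (d : ℝ≥0∞) (hd : EMetric.diam F ≤ d) :
    μH[1] F ≤ 2 * d := by
  set p : EuclideanSpace ℝ (Fin 2) → ℝ := fun x => (inner ℝ x T : ℝ) with hp
  -- p is 1-Lipschitz
  have hpl : LipschitzWith 1 p := by
    refine LipschitzWith.of_dist_le_mul fun x y => ?_
    rw [NNReal.coe_one, one_mul, dist_eq_norm, dist_eq_norm]
    calc |p x - p y| = |(inner ℝ (x - y) T : ℝ)| := by rw [hp]; simp [inner_sub_left]
      _ ≤ ‖x - y‖ * ‖T‖ := abs_real_inner_le_norm _ _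
      _ = ‖x - y‖ := by rw [hT, mul_one]
  set q : ℝ → EuclideanSpace ℝ (Fin 2) := Function.invFunOn p F with hq
  have hqmem : ∀ u ∈ p '' F, q u ∈ F ∧ p (q u) = u := by
    rintro u ⟨x, hx, rfl⟩
    exact ⟨Function.invFunOn_mem ⟨x, hx, rfl⟩, Function.invFunOn_eq ⟨x, hx, rfl⟩⟩
  have hFsub : F ⊆ q '' (p '' F) := by
    intro x hx
    obtain ⟨hm, he⟩ := hqmem (p x) ⟨x, hx, rfl⟩
    have : ‖x - q (p x)‖ ≤ 2 * |p x - p (q (p x))| := hexp x hx _ hm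
    rw [he, sub_self, abs_zero, mul_zero] at this
    have : x = q (p x) := by
      rwa [← sub_eq_zero, ← norm_le_zero_iff]
    exact ⟨p x, ⟨x, hx, rfl⟩, this.symm⟩
  have hql : LipschitzOnWith 2 q (p '' F) := by
    refine LipschitzOnWith.of_dist_le_mul fun u hu v hv => ?_
    obtain ⟨hum, hue⟩ := hqmem u hu
    obtain ⟨hvm, hve⟩ := hqmem v hv
    have h2 := hexp (q u) hum (q v) hvm
    rw [dist_eq_norm, Real.dist_eq]
    rw [show (inner ℝ (q u) T : ℝ) = u from hue, show (inner ℝ (q v) T : ℝ) = v from hve] at h2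
    simpa using h2
  calc μH[1] F ≤ μH[1] (q '' (p '' F)) := measure_mono hFsub
    _ ≤ (2 : ℝ≥0) ^ (1:ℝ) * μH[1] (p '' F) := hql.hausdorffMeasure_image_le zero_le_one
    _ = 2 * μH[1] (p '' F) := by norm_num
    _ ≤ 2 * d := by
        gcongr
        calc μH[1] (p '' F) = volume (p '' F) := by rw [MeasureTheory.hausdorffMeasure_real]
          _ ≤ EMetric.diam (p '' F) := Real.volume_le_diam _
          _ ≤ 1 * EMetric.diam F := hpl.ediam_image_le F
          _ ≤ d := by rwa [one_mul]

set_option maxHeartbeats 2000000 in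
/-- For a strongly convex energy level curve `Σ = {A⁰ = λ}` in dimension 2 (microhyperbolic:
`‖∇A⁰‖ ≥ ε₀` on `Σ`; strongly convex: `|D²A⁰(η,η)| ≥ ε‖η‖²` on tangent vectors), the
arc-length (1-dimensional Hausdorff) measure of the near-tangency set
`{ξ ∈ Σ : |⟨∇A⁰(ξ), e⟩| ≤ γ}` is `O(γ)`, uniformly in the unit vector `e`. -/
theorem stmt_14 (A0 : EuclideanSpace ℝ (Fin 2) → ℝ) (hA0 : ContDiff ℝ 2 A0)
    (lam : ℝ)
    (hne : {ξ : EuclideanSpace ℝ (Fin 2) | A0 ξ = lam}.Nonempty)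
    (hcpt : IsCompact {ξ : EuclideanSpace ℝ (Fin 2) | A0 ξ = lam})
    (ε₀ : ℝ) (hε₀ : 0 < ε₀)
    (hgrad : ∀ ξ, A0 ξ = lam → ε₀ ≤ ‖gradient A0 ξ‖)
    (ε : ℝ) (hε : 0 < ε)
    (hconv : ∀ ξ, A0 ξ = lam → ∀ η : EuclideanSpace ℝ (Fin 2),
      (inner ℝ (gradient A0 ξ) η : ℝ) = 0 →
        ε * ‖η‖ ^ 2 ≤ |iteratedFDeriv ℝ 2 A0 ξ ![η, η]|) :
    ∃ C : ℝ, ∀ e : EuclideanSpace ℝ (Fin 2), ‖e‖ = 1 →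
      ∀ γ ∈ Set.Ioc (0:ℝ) 1,
        μH[1] {ξ : EuclideanSpace ℝ (Fin 2) |
            A0 ξ = lam ∧ |(inner ℝ (gradient A0 ξ) e : ℝ)| ≤ γ} ≤
          ENNReal.ofReal (C * γ) := by
  classical
  -- a big closed ball containing a 1-neighborhood of Σ
  obtain ⟨R, hRsub⟩ := hcpt.isBounded.subset_closedBall 0
  set B : Set (EuclideanSpace ℝ (Fin 2)) := Metric.closedBall 0 (|R| + 2) with hBdef
  have hball1 : ∀ x, A0 x = lam → Metric.ball x 1 ⊆ B := by
    intro x hx y hy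
    have hx' : ‖x‖ ≤ R := by
      have := hRsub hx
      rwa [Metric.mem_closedBall, dist_zero_right] at this
    have hy' : dist y x < 1 := Metric.mem_ball.mp hy
    rw [hBdef, Metric.mem_closedBall, dist_zero_right]
    calc ‖y‖ = ‖y - x + x‖ := by rw [sub_add_cancel]
      _ ≤ ‖y - x‖ + ‖x‖ := norm_add_le _ _
      _ ≤ 1 + |R| := add_le_add (by rw [← dist_eq_norm]; exact hy'.le)
          (hx'.trans (le_abs_self R))
      _ ≤ |R| + 2 := by linarith
  have hBc : IsCompact B := isCompact_closedBall _ _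
  -- regularity data
  have hF1C : ContDiff ℝ 1 (fderiv ℝ A0) := hA0.fderiv_right (by norm_num)
  have hD2cont : Continuous (fderiv ℝ (fderiv ℝ A0)) := hF1C.continuous_fderiv one_ne_zero
  obtain ⟨M₀, hM₀⟩ := hBc.exists_bound_of_continuousOn (f := fderiv ℝ (fderiv ℝ A0)) hD2cont.continuousOn
  set M₂ : ℝ := max M₀ 1 with hM₂def
  have hM₂1 : 1 ≤ M₂ := le_max_right _ _
  have hM₂0 : 0 < M₂ := lt_of_lt_of_le one_pos hM₂1
  have hM₂ : ∀ p ∈ B, ‖fderiv ℝ (fderiv ℝ A0) p‖ ≤ M₂ :=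
    fun p hp => (hM₀ p hp).trans (le_max_left _ _)
  have hLip : ∀ p ∈ B, ∀ q ∈ B, ‖fderiv ℝ A0 p - fderiv ℝ A0 q‖ ≤ M₂ * ‖p - q‖ := by
    intro p hp q hq
    have := (convex_closedBall (0 : EuclideanSpace ℝ (Fin 2)) (|R| + 2)).norm_image_sub_le_of_norm_fderiv_le
      (f := fderiv ℝ A0) (fun z _ => (hF1C.differentiable one_ne_zero) z)
      (fun z hz => hM₂ z hz) hq hp
    simpa [dist_eq_norm] using this
  -- uniform continuity of the second derivative on B
  obtain ⟨δ₂, hδ₂pos, hδ₂⟩ := (Metric.uniformContinuousOn_iff (f := fderiv ℝ (fderiv ℝ A0))).mp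
    (hBc.uniformContinuousOn_of_continuous (f := fderiv ℝ (fderiv ℝ A0)) hD2cont.continuousOn) (ε / 16) (by positivity)
  have hδ₂' : ∀ p ∈ B, ∀ q ∈ B, dist p q < δ₂ →
      ‖fderiv ℝ (fderiv ℝ A0) p - fderiv ℝ (fderiv ℝ A0) q‖ < ε / 16 := by
    intro p hp q hq hpq
    have := hδ₂ p hp q hq hpq
    exact lt_of_eq_of_lt (dist_eq_norm (fderiv ℝ (fderiv ℝ A0) p) (fderiv ℝ (fderiv ℝ A0) q)).symm this
  -- the chart radius
  set ρ : ℝ := (min (min 1 (ε₀ / (2 * M₂))) (min (ε * ε₀ / (32 * M₂ ^ 2)) (δ₂ / 2))) / 2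
    with hρdef
  have hρpos : 0 < ρ := by
    apply div_pos _ (by norm_num)
    apply lt_min (lt_min one_pos (by positivity)) (lt_min (by positivity) (by positivity))
  have h2ρ1 : 2 * ρ ≤ 1 := by
    rw [hρdef]
    have := min_le_left (min 1 (ε₀ / (2 * M₂))) (min (ε * ε₀ / (32 * M₂ ^ 2)) (δ₂ / 2))
    have := min_le_left 1 (ε₀ / (2 * M₂))
    linarith [min_le_left (min 1 (ε₀ / (2 * M₂))) (min (ε * ε₀ / (32 * M₂ ^ 2)) (δ₂ / 2)),
      min_le_left 1 (ε₀ / (2 * M₂))]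
  have h2ρa : 2 * ρ ≤ ε₀ / (2 * M₂) := by
    rw [hρdef]
    linarith [min_le_left (min 1 (ε₀ / (2 * M₂))) (min (ε * ε₀ / (32 * M₂ ^ 2)) (δ₂ / 2)),
      min_le_right 1 (ε₀ / (2 * M₂))]
  have h2ρb : 2 * ρ ≤ ε * ε₀ / (32 * M₂ ^ 2) := by
    rw [hρdef]
    linarith [min_le_right (min 1 (ε₀ / (2 * M₂))) (min (ε * ε₀ / (32 * M₂ ^ 2)) (δ₂ / 2)),
      min_le_left (ε * ε₀ / (32 * M₂ ^ 2)) (δ₂ / 2)]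
  have h2ρc : 2 * ρ < δ₂ := by
    have : 2 * ρ ≤ δ₂ / 2 := by
      rw [hρdef]
      linarith [min_le_right (min 1 (ε₀ / (2 * M₂))) (min (ε * ε₀ / (32 * M₂ ^ 2)) (δ₂ / 2)),
        min_le_right (ε * ε₀ / (32 * M₂ ^ 2)) (δ₂ / 2)]
    linarith
  have hballB : ∀ x, A0 x = lam → Metric.ball x ρ ⊆ B := by
    intro x hx
    refine (Metric.ball_subset_ball ?_).trans (hball1 x hx)
    linarith
  -- small-γ threshold
  set γ₀ : ℝ := min (ε₀ / 2) (ε * ε₀ / (16 * M₂)) with hγ₀def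
  have hγ₀pos : 0 < γ₀ := lt_min (by positivity) (by positivity)
  -- the constant
  set K : ℝ := max (32 / ε) (2 * ρ / γ₀) with hKdef
  have hKpos : 0 < K := lt_of_lt_of_le (by positivity) (le_max_left _ _)
  -- finite cover of Σ by ρ-balls centered on Σ
  obtain ⟨t, htmem, htcover⟩ := hcpt.elim_nhds_subcover (fun x => Metric.ball x ρ)
    (fun x _ => Metric.ball_mem_nhds x hρpos)
  refine ⟨(t.card : ℝ) * (2 * K), ?_⟩
  intro e he γ hγ
  obtain ⟨hγpos, hγ1⟩ := hγ
  set Es : Set (EuclideanSpace ℝ (Fin 2)) :=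
    {ξ | A0 ξ = lam ∧ |(inner ℝ (gradient A0 ξ) e : ℝ)| ≤ γ} with hEsdef
  have hEs_fd : ∀ ξ ∈ Es, |fderiv ℝ A0 ξ e| ≤ γ := by
    intro ξ hξ
    have := hξ.2
    rwa [grad_inner] at this
  -- key per-ball estimate
  have key : ∀ x ∈ t, μH[1] (Es ∩ Metric.ball x ρ) ≤ 2 * ENNReal.ofReal (K * γ) := by
    intro x hx
    have hxS : A0 x = lam := htmem x hx
    have hgx : ε₀ ≤ ‖gradient A0 x‖ := hgrad x hxS
    have hgxne : gradient A0 x ≠ 0 := by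
      intro h; rw [h, norm_zero] at hgx; linarith
    set T := Jrot (‖gradient A0 x‖⁻¹ • gradient A0 x) with hTdef
    have hT1 : ‖T‖ = 1 := by rw [hTdef, norm_Jrot]; exact norm_smul_inv_norm hgxne
    apply measure_le_of_expand _ T hT1
    · -- expansion property
      intro p hp q hq
      exact expand_claim hA0 lam ε₀ hε₀ hgrad B M₂ hM₂1 hLip x hxS ρ hρpos h2ρa
        (hballB x hxS) p q hp.1.1 hq.1.1 hp.2 hq.2
    · -- diameter bound
      apply EMetric.diam_le
      intro p hp q hq
      rw [edist_dist]
      apply ENNReal.ofReal_le_ofReal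
      have hdistpq : dist p q < 2 * ρ := by
        calc dist p q ≤ dist p x + dist q x := dist_triangle_right p q x
          _ < ρ + ρ := add_lt_add (Metric.mem_ball.mp hp.2) (Metric.mem_ball.mp hq.2)
          _ = 2 * ρ := by ring
      by_cases hcase : γ ≤ γ₀
      · -- small γ: use the pairwise estimate
        have hγa : γ ≤ ε₀ / 2 := hcase.trans (min_le_left _ _)
        have hγb : γ ≤ ε * ε₀ / (16 * M₂) := hcase.trans (min_le_right _ _)
        have hqp : ‖q - p‖ ≤ 32 * γ / ε := by
          apply pair_claim hA0 lam ε₀ ε hε₀ hε hgrad hconv B M₂ hM₂1 hM₂ hLip δ₂ hδ₂'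
            e he γ hγpos hγa hγb p q hp.1.1 hq.1.1 (hEs_fd p hp.1) (hEs_fd q hq.1)
          · intro c hc
            exact hballB x hxS (seg_mem_ball hc hp.2 hq.2)
          · rw [← dist_eq_norm'] ; linarith
          · rw [← dist_eq_norm'] ; linarith
          · rw [← dist_eq_norm'] ; linarith
        have h32K : 32 / ε ≤ K := le_max_left _ _
        calc dist p q = ‖q - p‖ := dist_eq_norm' p q
          _ ≤ 32 * γ / ε := hqp
          _ = (32 / ε) * γ := by ring
          _ ≤ K * γ := mul_le_mul_of_nonneg_right h32K hγpos.le
      · -- large γ: trivial diameter bound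
        push_neg at hcase
        have hKρ : 2 * ρ / γ₀ ≤ K := le_max_right _ _
        have h2ρK : 2 * ρ ≤ K * γ₀ := by
          have := (div_le_iff₀ hγ₀pos).mp hKρ
          linarith
        calc dist p q ≤ 2 * ρ := hdistpq.le
          _ ≤ K * γ₀ := h2ρK
          _ ≤ K * γ := mul_le_mul_of_nonneg_left hcase.le hKpos.le
  -- assemble
  have hcover' : Es ⊆ ⋃ x ∈ t, Es ∩ Metric.ball x ρ := by
    intro ξ hξ
    have := htcover hξ.1
    rw [Set.mem_iUnion₂] at this ⊢
    obtain ⟨x, hx, hmem⟩ := this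
    exact ⟨x, hx, hξ, hmem⟩
  calc μH[1] Es ≤ μH[1] (⋃ x ∈ t, Es ∩ Metric.ball x ρ) := measure_mono hcover'
    _ ≤ ∑ x ∈ t, μH[1] (Es ∩ Metric.ball x ρ) := measure_biUnion_finset_le t _
    _ ≤ ∑ _x ∈ t, 2 * ENNReal.ofReal (K * γ) := Finset.sum_le_sum key
    _ = (t.card : ℝ≥0∞) * (2 * ENNReal.ofReal (K * γ)) := by
        rw [Finset.sum_const, nsmul_eq_mul]
    _ ≤ ENNReal.ofReal ((t.card : ℝ) * (2 * K) * γ) := by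
        have heq : ENNReal.ofReal ((t.card : ℝ) * (2 * K) * γ)
            = (t.card : ℝ≥0∞) * (2 * ENNReal.ofReal (K * γ)) := by
          rw [show ((t.card : ℝ) * (2 * K)) * γ = (t.card : ℝ) * (2 * (K * γ)) by ring,
            ENNReal.ofReal_mul (by positivity : (0:ℝ) ≤ (t.card : ℝ)),
            ENNReal.ofReal_mul (by norm_num : (0:ℝ) ≤ 2),
            ENNReal.ofReal_natCast, ENNReal.ofReal_ofNat]
        rw [heq]
end
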